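/- arXiv:1405.4929 — 2 statements merged into one kernel-verified Lean document; each statement's English description precedes it below -/
import Mathlib

section
/- For all relations P = (A,B,R) and Q = (C,B,T), the games G_γ(P,Q) and G_1(Dom(P), Dom_γ(Q)) are dual: ONE has a winning strategy in G_γ(P,Q) if and only if TWO has a winning strategy in G_1(Dom(P), Dom_γ(Q)), and TWO has a winning strategy in G_γ(P,Q) if and only if ONE has a winning strategy in G_1(Dom(P), Dom_γ(Q)). -/
open Set

/-- `GDom R` is the set of dominating families of the relation `R`:
sets `Z ⊆ B` such that every `a ∈ A` is dominated by some `b ∈ Z`. -/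
def GDom {α β : Type*} (R : α → β → Prop) : Set (Set β) :=
  {Z | ∀ a : α, ∃ b ∈ Z, R a b}

/-- A relation is total: every element of the domain is dominated by something. -/
def IsTotalRel {α β : Type*} (R : α → β → Prop) : Prop :=
  ∀ a : α, ∃ b : β, R a b

/-- The product of two relations. -/
def GProd {α β α' β' : Type*} (R : α → β → Prop) (R' : α' → β' → Prop) :
    α × α' → β × β' → Prop :=
  fun a b => R a.1 b.1 ∧ R' a.2 b.2

/-- The finite history consisting of the first `n` moves of the sequence `b`. -/
def GHist {β : Type*} (b : ℕ → β) (n : ℕ) : List β :=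
  List.ofFn fun i : Fin n => b i

/-- ONE has a winning strategy in the game `G(P,Q)`: in inning `n` ONE plays `aₙ ∈ A`,
TWO answers `bₙ` with `R aₙ bₙ`; ONE wins iff `{bₙ : n} ∈ GDom T`. -/
def OneWinsG {α β γ : Type*} (R : α → β → Prop) (T : γ → β → Prop) : Prop :=
  ∃ σ : List β → α, ∀ b : ℕ → β,
    (∀ n, R (σ (GHist b n)) (b n)) → Set.range b ∈ GDom T

/-- TWO has a winning strategy in the game `G(P,Q)`. -/
def TwoWinsG {α β γ : Type*} (R : α → β → Prop) (T : γ → β → Prop) : Prop :=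
  ∃ τ : List α → β, ∀ a : ℕ → α,
    (∀ n, R (a n) (τ (GHist a (n + 1)))) ∧
    Set.range (fun n => τ (GHist a (n + 1))) ∉ GDom T

/-- ONE has a winning strategy in the game `G₁(𝒜,ℬ)`: in inning `n` ONE plays `Aₙ ∈ 𝒜`,
TWO answers `bₙ ∈ Aₙ`; TWO wins iff `{bₙ : n} ∈ ℬ`. -/
def OneWinsG1 {β : Type*} (𝒜 ℬ : Set (Set β)) : Prop :=
  ∃ σ : List β → Set β, (∀ h, σ h ∈ 𝒜) ∧
    ∀ b : ℕ → β, (∀ n, b n ∈ σ (GHist b n)) → Set.range b ∉ ℬ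

/-- TWO has a winning strategy in the game `G₁(𝒜,ℬ)`. -/
def TwoWinsG1 {β : Type*} (𝒜 ℬ : Set (Set β)) : Prop :=
  ∃ τ : List (Set β) → β, ∀ S : ℕ → Set β, (∀ n, S n ∈ 𝒜) →
    (∀ n, τ (GHist S (n + 1)) ∈ S n) ∧
    Set.range (fun n => τ (GHist S (n + 1))) ∈ ℬ

/-- TWO has a winning strategy in the game `G_fin(𝒜,ℬ)`: in inning `n` ONE plays `Aₙ ∈ 𝒜`,
TWO answers a finite `Fₙ ⊆ Aₙ`; TWO wins iff `⋃ₙ Fₙ ∈ ℬ`. -/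
def TwoWinsGfin {β : Type*} (𝒜 ℬ : Set (Set β)) : Prop :=
  ∃ τ : List (Set β) → Set β, ∀ S : ℕ → Set β, (∀ n, S n ∈ 𝒜) →
    (∀ n, τ (GHist S (n + 1)) ⊆ S n ∧ (τ (GHist S (n + 1))).Finite) ∧
    (⋃ n, τ (GHist S (n + 1))) ∈ ℬ

/-- `(𝒜,ℬ)`-Lindelöf: every member of `𝒜` has a countable subset belonging to `ℬ`. -/
def LindelofFam {β : Type*} (𝒜 ℬ : Set (Set β)) : Prop :=
  ∀ S ∈ 𝒜, ∃ C ⊆ S, C.Countable ∧ C ∈ ℬ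

/-- The selection principle `S₁(𝒜,ℬ)`. -/
def SelS1 {β : Type*} (𝒜 ℬ : Set (Set β)) : Prop :=
  ∀ A : ℕ → Set β, (∀ n, A n ∈ 𝒜) →
    ∃ b : ℕ → β, (∀ n, b n ∈ A n) ∧ Set.range b ∈ ℬ

/-- The selection principle `S_fin(𝒜,ℬ)`. -/
def SelSfin {β : Type*} (𝒜 ℬ : Set (Set β)) : Prop :=
  ∀ A : ℕ → Set β, (∀ n, A n ∈ 𝒜) →
    ∃ F : ℕ → Set β, (∀ n, F n ⊆ A n ∧ (F n).Finite) ∧ (⋃ n, F n) ∈ ℬ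

/-- `𝒪_X`: the family of open covers of `X`. -/
def OpenCovers (X : Type*) [TopologicalSpace X] : Set (Set (Set X)) :=
  {𝒰 | (∀ U ∈ 𝒰, IsOpen U) ∧ ⋃₀ 𝒰 = Set.univ}

/-- ONE has a winning strategy in the point-open game on `X`. -/
def OneWinsPointOpen (X : Type*) [TopologicalSpace X] : Prop :=
  ∃ σ : List (Set X) → X, ∀ U : ℕ → Set X,
    (∀ n, IsOpen (U n) ∧ σ (GHist U n) ∈ U n) → Set.range U ∈ OpenCovers X

/-- TWO has a winning strategy in the point-open game on `X`. -/
def TwoWinsPointOpen (X : Type*) [TopologicalSpace X] : Prop :=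
  ∃ τ : List X → Set X, ∀ x : ℕ → X,
    (∀ n, IsOpen (τ (GHist x (n + 1))) ∧ x n ∈ τ (GHist x (n + 1))) ∧
    Set.range (fun n => τ (GHist x (n + 1))) ∉ OpenCovers X

/-- `𝔇_X`: the family of dense subsets of `X`. -/
def DenseSets (X : Type*) [TopologicalSpace X] : Set (Set X) :=
  {D | Dense D}

/-- ONE has a winning strategy in the point-picking game `G^D_ω(X)` of Berner and Juhász. -/
def OneWinsPointPicking (X : Type*) [TopologicalSpace X] : Prop :=
  ∃ σ : List X → Set X, (∀ h, IsOpen (σ h) ∧ (σ h).Nonempty) ∧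
    ∀ x : ℕ → X, (∀ n, x n ∈ σ (GHist x n)) → Dense (Set.range x)

/-- TWO has a winning strategy in the point-picking game `G^D_ω(X)`. -/
def TwoWinsPointPicking (X : Type*) [TopologicalSpace X] : Prop :=
  ∃ τ : List (Set X) → X, ∀ U : ℕ → Set X,
    (∀ n, IsOpen (U n) ∧ (U n).Nonempty) →
    (∀ n, τ (GHist U (n + 1)) ∈ U n) ∧
    ¬ Dense (Set.range fun n => τ (GHist U (n + 1)))

/-- `𝒟_X`: families of open sets whose union is dense in `X`. -/
def DenseUnionFams (X : Type*) [TopologicalSpace X] : Set (Set (Set X)) :=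
  {𝒰 | (∀ U ∈ 𝒰, IsOpen U) ∧ Dense (⋃₀ 𝒰)}

/-- ONE has a winning strategy in Tkachuk's game `θ(X)`. -/
def OneWinsTheta (X : Type*) [TopologicalSpace X] : Prop :=
  ∃ σ : List (Set X) → X, ∀ U : ℕ → Set X,
    (∀ n, IsOpen (U n) ∧ σ (GHist U n) ∈ U n) → Dense (⋃ n, U n)

/-- TWO has a winning strategy in Tkachuk's game `θ(X)`. -/
def TwoWinsTheta (X : Type*) [TopologicalSpace X] : Prop :=
  ∃ τ : List X → Set X, ∀ x : ℕ → X,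
    (∀ n, IsOpen (τ (GHist x (n + 1))) ∧ x n ∈ τ (GHist x (n + 1))) ∧
    ¬ Dense (⋃ n, τ (GHist x (n + 1)))

/-- `Ω_x`: the family of subsets of `X` having `x` in their closure. -/
def OmegaPt {X : Type*} [TopologicalSpace X] (x : X) : Set (Set X) :=
  {A | x ∈ closure A}

/-- ONE has a winning strategy in Gruenhage's game `G^c_{O,P}(X,x)`. -/
def OneWinsGruenhage {X : Type*} [TopologicalSpace X] (x : X) : Prop :=
  ∃ σ : List X → Set X, (∀ h, IsOpen (σ h) ∧ x ∈ σ h) ∧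
    ∀ y : ℕ → X, (∀ n, y n ∈ σ (GHist y n)) → x ∈ closure (Set.range y)

/-- TWO has a winning strategy in Gruenhage's game `G^c_{O,P}(X,x)`. -/
def TwoWinsGruenhage {X : Type*} [TopologicalSpace X] (x : X) : Prop :=
  ∃ τ : List (Set X) → X, ∀ V : ℕ → Set X,
    (∀ n, IsOpen (V n) ∧ x ∈ V n) →
    (∀ n, τ (GHist V (n + 1)) ∈ V n) ∧
    x ∉ closure (Set.range fun n => τ (GHist V (n + 1)))

/-- ONE has a winning strategy in the compact-open game on `X`. -/
def OneWinsCompactOpen (X : Type*) [TopologicalSpace X] : Prop :=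
  ∃ σ : List (Set X) → Set X, (∀ h, IsCompact (σ h)) ∧
    ∀ U : ℕ → Set X, (∀ n, IsOpen (U n) ∧ σ (GHist U n) ⊆ U n) →
      (⋃ n, U n) = Set.univ

/-- `⪯` is downwards `P`-compatible. -/
def DownwardsCompat {α β : Type*} (R : α → β → Prop) (le : β → β → Prop) : Prop :=
  ∀ a b₁ b₂, R a b₁ → R a b₂ → ∃ b, R a b ∧ le b b₁ ∧ le b b₂

/-- `⪯` is upwards `Q`-compatible. -/
def UpwardsCompat {γ β : Type*} (T : γ → β → Prop) (le : β → β → Prop) : Prop :=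
  ∀ c b₁ b₂, T c b₁ → le b₁ b₂ → T c b₂

/-- `⪯` is countably downwards `P`-compatible. -/
def CountablyDownwardsCompat {α β : Type*} (R : α → β → Prop) (le : β → β → Prop) : Prop :=
  ∀ a, ∀ E : Set β, E.Countable → E.Nonempty → (∀ b ∈ E, R a b) →
    ∃ b', R a b' ∧ ∀ b ∈ E, le b' b

/-- A relation is `ℵ₀`-preserving if some partial order on `B` is both upwards
compatible and countably downwards compatible with it. -/
def Aleph0Preserving {α β : Type*} (R : α → β → Prop) : Prop :=
  ∃ le : β → β → Prop, IsPartialOrder β le ∧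
    UpwardsCompat R le ∧ CountablyDownwardsCompat R le

/-- `Dom_γ(T)`: the γ-dominating sequences of the relation `T`. -/
def GDomGamma {γ β : Type*} (T : γ → β → Prop) : Set (ℕ → β) :=
  {z | ∀ c : γ, {n : ℕ | ¬ T c (z n)}.Finite}

/-- ONE has a winning strategy in the game `G_γ(P,Q)`. -/
def OneWinsGgamma {α β γ : Type*} (R : α → β → Prop) (T : γ → β → Prop) : Prop :=
  ∃ σ : List β → α, ∀ b : ℕ → β,
    (∀ n, R (σ (GHist b n)) (b n)) → b ∈ GDomGamma T

/-- TWO has a winning strategy in the game `G_γ(P,Q)`. -/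
def TwoWinsGgamma {α β γ : Type*} (R : α → β → Prop) (T : γ → β → Prop) : Prop :=
  ∃ τ : List α → β, ∀ a : ℕ → α,
    (∀ n, R (a n) (τ (GHist a (n + 1)))) ∧
    (fun n => τ (GHist a (n + 1))) ∉ GDomGamma T

/-- ONE has a winning strategy in the game `G₁(𝒜, Dom_γ(T))`. -/
def OneWinsG1gamma {β γ : Type*} (𝒜 : Set (Set β)) (T : γ → β → Prop) : Prop :=
  ∃ σ : List β → Set β, (∀ h, σ h ∈ 𝒜) ∧
    ∀ b : ℕ → β, (∀ n, b n ∈ σ (GHist b n)) → b ∉ GDomGamma T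

/-- TWO has a winning strategy in the game `G₁(𝒜, Dom_γ(T))`. -/
def TwoWinsG1gamma {β γ : Type*} (𝒜 : Set (Set β)) (T : γ → β → Prop) : Prop :=
  ∃ τ : List (Set β) → β, ∀ S : ℕ → Set β, (∀ n, S n ∈ 𝒜) →
    (∀ n, τ (GHist S (n + 1)) ∈ S n) ∧
    (fun n => τ (GHist S (n + 1))) ∈ GDomGamma T

/-- The `ℵ₀`-modification of a relation: moves become nonempty countable subsets of `B`,
dominated pointwise. -/
def CountMod {α β : Type*} (R : α → β → Prop) :
    α → {E : Set β // E.Countable ∧ E.Nonempty} → Prop :=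
  fun a E => ∀ b ∈ E.1, R a b

section Aux16
variable {X Y : Type*}

def gtrans16 (step : List Y → X → Y) : List Y → List X → List Y
  | _, [] => []
  | h, x :: l => step h x :: gtrans16 step (h ++ [step h x]) l

lemma gtrans16_append (step : List Y → X → Y) :
    ∀ (l : List X) (h : List Y) (x : X),
      gtrans16 step h (l ++ [x]) = gtrans16 step h l ++ [step (h ++ gtrans16 step h l) x]
  | [], h, x => by simp [gtrans16]
  | x' :: l, h, x => by
      show step h x' :: gtrans16 step (h ++ [step h x']) (l ++ [x]) = _
      rw [gtrans16_append step l]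
      simp [gtrans16, List.append_assoc]

lemma GHist_succ {β : Type*} (b : ℕ → β) (n : ℕ) :
    GHist b (n + 1) = GHist b n ++ [b n] := by
  unfold GHist
  rw [List.ofFn_succ']
  simp [Fin.last]

lemma GHist_zero {β : Type*} (b : ℕ → β) : GHist b 0 = [] := by simp [GHist]

lemma GHist_of_list {β : Type*} (l : List β) (f : ℕ → β)
    (h : ∀ i (hi : i < l.length), f i = l.get ⟨i, hi⟩) :
    GHist f l.length = l := by
  unfold GHist
  rw [show (fun i : Fin l.length => f i) = l.get from funext fun i => h i i.2, List.ofFn_get]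

lemma mem_GHist {β : Type*} {b : ℕ → β} {n : ℕ} {y : β} (h : y ∈ GHist b n) :
    ∃ m < n, b m = y := by
  rw [GHist, List.mem_ofFn] at h
  obtain ⟨i, hi⟩ := h
  exact ⟨i, i.2, hi⟩

noncomputable def gplay16 (step : List Y → X → Y) (d : Y) (x : ℕ → X) (n : ℕ) : Y :=
  (gtrans16 step [] (GHist x (n + 1))).getLastD d

lemma gtrans16_spec (step : List Y → X → Y) (d : Y) (x : ℕ → X) :
    ∀ n, gtrans16 step [] (GHist x n) = GHist (gplay16 step d x) n := by
  intro n
  induction n with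
  | zero => simp [GHist_zero, gtrans16]
  | succ n ih =>
    have h1 : gtrans16 step [] (GHist x (n + 1))
        = GHist (gplay16 step d x) n ++ [step (GHist (gplay16 step d x) n) (x n)] := by
      rw [GHist_succ x n, gtrans16_append, ih]; simp
    have h2 : gplay16 step d x n = step (GHist (gplay16 step d x) n) (x n) := by
      show (gtrans16 step [] (GHist x (n + 1))).getLastD d = _
      rw [h1, List.getLastD_concat]
    rw [h1, GHist_succ (gplay16 step d x) n, h2]

lemma gplay16_eq (step : List Y → X → Y) (d : Y) (x : ℕ → X) (n : ℕ) :
    gplay16 step d x n = step (GHist (gplay16 step d x) n) (x n) := by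
  show (gtrans16 step [] (GHist x (n + 1))).getLastD d = _
  rw [GHist_succ x n, gtrans16_append, gtrans16_spec step d x n, List.nil_append,
    List.getLastD_concat]

/-- Extend a finite list to an infinite sequence. -/
noncomputable def gext16 {β : Type*} (l : List β) (d : β) (n : ℕ) : β :=
  if hn : n < l.length then l.get ⟨n, hn⟩ else d

lemma GHist_gext16 {β : Type*} (l : List β) (d : β) :
    GHist (gext16 l d) l.length = l :=
  GHist_of_list l _ fun i hi => dif_pos hi

end Aux16

section Dual16
attribute [local instance] Classical.propDecidable
variable {α β γ : Type*}

lemma univ_mem_GDom {R : α → β → Prop} (hR : IsTotalRel R) : Set.univ ∈ GDom R :=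
  fun a => let ⟨b, hb⟩ := hR a; ⟨b, trivial, hb⟩

noncomputable def stepA (R : α → β → Prop) (σ : List β → α) (d : β) :
    List β → Set β → β :=
  fun hb S => if h : ∃ b ∈ S, R (σ hb) b then h.choose else d

lemma stepA_spec (R : α → β → Prop) (σ : List β → α) (d : β) {hb : List β} {S : Set β}
    (h : ∃ b ∈ S, R (σ hb) b) :
    stepA R σ d hb S ∈ S ∧ R (σ hb) (stepA R σ d hb S) := by
  unfold stepA; rw [dif_pos h]; exact ⟨h.choose_spec.1, h.choose_spec.2⟩

lemma dual16_A (R : α → β → Prop) (T : γ → β → Prop) (d : β) :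
    OneWinsGgamma R T → TwoWinsG1gamma (GDom R) T := by
  rintro ⟨σ, hσ⟩
  refine ⟨fun l => (gtrans16 (stepA R σ d) [] l).getLastD d, fun S hS => ?_⟩
  have key : ∀ n, gplay16 (stepA R σ d) d S n ∈ S n ∧
      R (σ (GHist (gplay16 (stepA R σ d) d S) n)) (gplay16 (stepA R σ d) d S n) := by
    intro n
    rw [gplay16_eq]
    exact stepA_spec R σ d (hS n (σ (GHist (gplay16 (stepA R σ d) d S) n)))
  exact ⟨fun n => (key n).1, hσ (gplay16 (stepA R σ d) d S) fun n => (key n).2⟩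

noncomputable def stepD (R : α → β → Prop) (σ : List β → Set β)
    (hσ : ∀ h, σ h ∈ GDom R) : List β → α → β :=
  fun hb a => (hσ hb a).choose

lemma dual16_D (R : α → β → Prop) (T : γ → β → Prop) (d : β) :
    OneWinsG1gamma (GDom R) T → TwoWinsGgamma R T := by
  rintro ⟨σ, hσA, hσW⟩
  refine ⟨fun l => (gtrans16 (stepD R σ hσA) [] l).getLastD d, fun a => ?_⟩
  have key : ∀ n, gplay16 (stepD R σ hσA) d a n ∈ σ (GHist (gplay16 (stepD R σ hσA) d a) n) ∧
      R (a n) (gplay16 (stepD R σ hσA) d a n) := by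
    intro n
    rw [gplay16_eq]
    exact ⟨(hσA _ (a n)).choose_spec.1, (hσA _ (a n)).choose_spec.2⟩
  exact ⟨fun n => (key n).2, hσW (gplay16 (stepD R σ hσA) d a) fun n => (key n).1⟩

noncomputable def stepC (τ' : List α → β) (a0 : α) : List α → β → α :=
  fun ha b => if h : ∃ a, τ' (ha ++ [a]) = b then h.choose else a0

lemma stepC_spec (τ' : List α → β) (a0 : α) {ha : List α} {b : β}
    (h : ∃ a, τ' (ha ++ [a]) = b) : τ' (ha ++ [stepC τ' a0 ha b]) = b := by
  unfold stepC; rw [dif_pos h]; exact h.choose_spec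

lemma dual16_C [Nonempty α] (R : α → β → Prop) (T : γ → β → Prop) :
    TwoWinsGgamma R T → OneWinsG1gamma (GDom R) T := by
  rintro ⟨τ', hτ⟩
  have a0 : α := Classical.arbitrary α
  have legal : ∀ (la : List α) (a : α), R a (τ' (la ++ [a])) := by
    intro la a
    have h1 := (hτ (gext16 (la ++ [a]) a0)).1 la.length
    have hlen : (la ++ [a]).length = la.length + 1 := by simp
    have h2 : GHist (gext16 (la ++ [a]) a0) (la.length + 1) = la ++ [a] := by
      rw [← hlen]; exact GHist_gext16 _ _
    have h3 : gext16 (la ++ [a]) a0 la.length = a := by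
      unfold gext16
      rw [dif_pos (by simp : la.length < (la ++ [a]).length)]
      simp [List.getElem_concat_length]
    rw [h2, h3] at h1
    exact h1
  refine ⟨fun l => Set.range (fun a : α => τ' (gtrans16 (stepC τ' a0) [] l ++ [a])),
    fun l a => ⟨τ' (gtrans16 (stepC τ' a0) [] l ++ [a]), ⟨a, rfl⟩, legal _ a⟩,
    fun b hb => ?_⟩
  have key : ∀ n, τ' (GHist (gplay16 (stepC τ' a0) a0 b) (n + 1)) = b n := by
    intro n
    have hbn : ∃ a, τ' (gtrans16 (stepC τ' a0) [] (GHist b n) ++ [a]) = b n := hb n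
    rw [gtrans16_spec (stepC τ' a0) a0 b n] at hbn
    rw [GHist_succ, gplay16_eq]
    exact stepC_spec τ' a0 hbn
  have hfin := (hτ (gplay16 (stepC τ' a0) a0 b)).2
  rwa [show (fun n => τ' (GHist (gplay16 (stepC τ' a0) a0 b) (n + 1))) = b from
    funext key] at hfin

noncomputable def stepB (R : α → β → Prop) (τ : List (Set β) → β) :
    List (Set β) → β → Set β :=
  fun hS b => if h : ∃ S ∈ GDom R, τ (hS ++ [S]) = b then h.choose else Set.univ

lemma stepB_spec (R : α → β → Prop) (τ : List (Set β) → β) {hS : List (Set β)} {b : β}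
    (h : ∃ S ∈ GDom R, τ (hS ++ [S]) = b) :
    stepB R τ hS b ∈ GDom R ∧ τ (hS ++ [stepB R τ hS b]) = b := by
  unfold stepB; rw [dif_pos h]; exact ⟨h.choose_spec.1, h.choose_spec.2⟩

noncomputable def pickB (R : α → β → Prop) (τ : List (Set β) → β) (a0 : α) :
    List (Set β) → α :=
  fun h => if hc : ∃ a : α, ∀ b, R a b → ∃ S ∈ GDom R, τ (h ++ [S]) = b then hc.choose else a0

lemma pickB_spec (R : α → β → Prop) (τ : List (Set β) → β) (a0 : α) {h : List (Set β)}
    (hc : ∃ a : α, ∀ b, R a b → ∃ S ∈ GDom R, τ (h ++ [S]) = b) :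
    ∀ b, R (pickB R τ a0 h) b → ∃ S ∈ GDom R, τ (h ++ [S]) = b := by
  unfold pickB; rw [dif_pos hc]; exact hc.choose_spec

lemma keyB [Nonempty α] (R : α → β → Prop) (T : γ → β → Prop) (hR : IsTotalRel R)
    (τ : List (Set β) → β)
    (hτ : ∀ S : ℕ → Set β, (∀ n, S n ∈ GDom R) →
      (∀ n, τ (GHist S (n + 1)) ∈ S n) ∧ (fun n => τ (GHist S (n + 1))) ∈ GDomGamma T)
    (h : List (Set β)) (hh : ∀ S ∈ h, S ∈ GDom R) :
    ∃ a : α, ∀ b, R a b → ∃ S ∈ GDom R, τ (h ++ [S]) = b := by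
  by_contra hcon
  push_neg at hcon
  choose f hf1 hf2 using hcon
  have hSstar : Set.range f ∈ GDom R := fun a => ⟨f a, ⟨a, rfl⟩, hf1 a⟩
  have hall : ∀ n, gext16 (h ++ [Set.range f]) Set.univ n ∈ GDom R := by
    intro n
    unfold gext16
    split
    · next hn =>
      have hmem : (h ++ [Set.range f]).get ⟨n, hn⟩ ∈ h ++ [Set.range f] := List.get_mem _ ⟨n, hn⟩
      rcases List.mem_append.mp hmem with h1 | h2
      · exact hh _ h1
      · rw [List.mem_singleton.mp h2]; exact hSstar
    · exact univ_mem_GDom hR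
  have h1 := (hτ (gext16 (h ++ [Set.range f]) Set.univ) hall).1 h.length
  have hlen : (h ++ [Set.range f]).length = h.length + 1 := by simp
  have h2 : GHist (gext16 (h ++ [Set.range f]) Set.univ) (h.length + 1) = h ++ [Set.range f] := by
    rw [← hlen]; exact GHist_gext16 _ _
  have h3 : gext16 (h ++ [Set.range f]) Set.univ h.length = Set.range f := by
    unfold gext16
    rw [dif_pos (by simp : h.length < (h ++ [Set.range f]).length)]
    simp [List.getElem_concat_length]
  rw [h2, h3] at h1
  obtain ⟨a, ha⟩ := h1
  exact hf2 a _ hSstar ha.symm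

lemma dual16_B [Nonempty α] (R : α → β → Prop) (T : γ → β → Prop) (hR : IsTotalRel R) :
    TwoWinsG1gamma (GDom R) T → OneWinsGgamma R T := by
  rintro ⟨τ, hτ⟩
  have a0 : α := Classical.arbitrary α
  refine ⟨fun lb => pickB R τ a0 (gtrans16 (stepB R τ) [] lb), fun b hb => ?_⟩
  have key : ∀ n, gplay16 (stepB R τ) Set.univ b n ∈ GDom R ∧
      τ (GHist (gplay16 (stepB R τ) Set.univ b) (n + 1)) = b n := by
    intro n
    induction n using Nat.strong_induction_on with
    | _ n ih =>
      have hmem : ∀ S ∈ GHist (gplay16 (stepB R τ) Set.univ b) n, S ∈ GDom R := by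
        intro S hS
        obtain ⟨m, hm, heq⟩ := mem_GHist hS
        rw [← heq]; exact (ih m hm).1
      have hc := keyB R T hR τ hτ _ hmem
      have hRb : R (pickB R τ a0 (gtrans16 (stepB R τ) [] (GHist b n))) (b n) := hb n
      rw [gtrans16_spec (stepB R τ) Set.univ b n] at hRb
      have hex : ∃ S ∈ GDom R, τ (GHist (gplay16 (stepB R τ) Set.univ b) n ++ [S]) = b n :=
        pickB_spec R τ a0 hc (b n) hRb
      constructor
      · rw [gplay16_eq]; exact (stepB_spec R τ hex).1
      · rw [GHist_succ, gplay16_eq]; exact (stepB_spec R τ hex).2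
  have hfin := (hτ (gplay16 (stepB R τ) Set.univ b) fun n => (key n).1).2
  rwa [show (fun n => τ (GHist (gplay16 (stepB R τ) Set.univ b) (n + 1))) = b from
    funext fun n => (key n).2] at hfin

end Dual16

/-- For all relations `P = (A,B,R)` and `Q = (C,B,T)`, the games
`G_γ(P,Q)` and `G₁(Dom(P), Dom_γ(Q))` are dual. -/
theorem statement16 {α β γ : Type*} [Nonempty α] [Nonempty γ]
    (R : α → β → Prop) (T : γ → β → Prop)
    (hR : IsTotalRel R) (hT : IsTotalRel T) :
    (OneWinsGgamma R T ↔ TwoWinsG1gamma (GDom R) T) ∧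
    (TwoWinsGgamma R T ↔ OneWinsG1gamma (GDom R) T) := by
  classical
  have d : β := (hR (Classical.arbitrary α)).choose
  exact ⟨⟨dual16_A R T d, dual16_B R T hR⟩, ⟨dual16_C R T, dual16_D R T d⟩⟩
end

section
/- Let P = (A,B,R) and Q = (C,B,T) be relations. Suppose there is a downwards P-compatible partial order ⊴ on A such that for each finite subset F of A there is ã(F) ∈ A with a ⊴ ã(F) for all a ∈ F. Then ONE has a winning strategy in G(P,Q) if and only if ONE has a winning strategy in G_γ(P,Q). -/
open Set

theorem ghist_succ {β : Type*} (b : ℕ → β) (k : ℕ) :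
    GHist b (k + 1) = GHist b k ++ [b k] := by
  show (List.ofFn fun i : Fin (k+1) => b i) = _
  rw [List.ofFn_succ']
  simp [GHist, List.concat_eq_append, Fin.last]

theorem ghist_sublist {β : Type*} (b : ℕ → β) (f : ℕ → ℕ) (hf : StrictMono f) :
    ∀ m k, (∀ i < k, f i < m) → (GHist (fun i => b (f i)) k).Sublist (GHist b m) := by
  intro m
  induction m with
  | zero =>
    intro k hk
    match k with
    | 0 => simp [GHist]
    | k + 1 => exact absurd (hk 0 (Nat.succ_pos _)) (Nat.not_lt_zero _)
  | succ m ih =>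
    intro k hk
    match k with
    | 0 => simp [GHist]
    | k + 1 =>
      rw [ghist_succ, ghist_succ]
      rcases Nat.lt_succ_iff_lt_or_eq.mp (hk k (Nat.lt_succ_self _)) with h | h
      · have := ih (k + 1) (fun i hi => lt_of_le_of_lt (hf.monotone (Nat.lt_succ_iff.mp hi)) h)
        rw [ghist_succ] at this
        exact this.trans (List.sublist_append_left _ _)
      · exact List.Sublist.append
          (ih k (fun i hi => h ▸ hf hi)) (by simp [h])

/-- If there is a downwards `P`-compatible partial order on `A` in which
every finite subset of `A` has an upper bound, then ONE has a winning strategy in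
`G(P,Q)` iff ONE has a winning strategy in `G_γ(P,Q)`. -/
theorem statement17 {α β γ : Type*} [Nonempty α] [Nonempty γ]
    (R : α → β → Prop) (T : γ → β → Prop)
    (hR : IsTotalRel R) (hT : IsTotalRel T)
    (le : α → α → Prop) (hpo : IsPartialOrder α le)
    (hdown : ∀ a₁ a₂ b, le a₁ a₂ → R a₂ b → R a₁ b)
    (hub : ∀ F : Finset α, ∃ a, ∀ a' ∈ F, le a' a) :
    OneWinsG R T ↔ OneWinsGgamma R T := by
    classical
  constructor
  · rintro ⟨σ, hσ⟩
    choose ub hub' using hub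
    refine ⟨fun h => ub ((h.sublists.map σ).toFinset), ?_⟩
    intro b hb c
    by_contra hbad
    have hinf : {n : ℕ | ¬ T c (b n)}.Infinite := hbad
    set f : ℕ → ℕ := Nat.nth (fun n => ¬ T c (b n)) with hf
    have hmono : StrictMono f := Nat.nth_strictMono hinf
    have hmem : ∀ k, ¬ T c (b (f k)) := fun k => Nat.nth_mem_of_infinite hinf k
    have key : ∀ k, R (σ (GHist (fun i => b (f i)) k)) (b (f k)) := by
      intro k
      have hsub : (GHist (fun i => b (f i)) k).Sublist (GHist b (f k)) :=
        ghist_sublist b f hmono (f k) k (fun i hi => hmono hi)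
      have hle : le (σ (GHist (fun i => b (f i)) k))
          (ub (((GHist b (f k)).sublists.map σ).toFinset)) := by
        apply hub'
        rw [List.mem_toFinset]
        exact List.mem_map_of_mem (f := σ) (List.mem_sublists.mpr hsub)
      exact hdown _ _ _ hle (hb (f k))
    obtain ⟨x, hx, hTx⟩ := hσ (fun i => b (f i)) key c
    obtain ⟨k, rfl⟩ := hx
    exact hmem k hTx
  · rintro ⟨σ, hσ⟩
    refine ⟨σ, fun b hb a => ?_⟩
    have hfin := hσ b hb a
    have hinf : {n : ℕ | ¬ T a (b n)}ᶜ.Infinite := hfin.infinite_compl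
    obtain ⟨n, hn⟩ := hinf.nonempty
    exact ⟨b n, Set.mem_range_self n, not_not.mp hn⟩
end
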